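/- An orientation of the complete bipartite graph K_{n₁,n₂} is acyclic if and only if it contains no directed cycle of length 4. -/

import Mathlib

/-- An orientation of a simple graph `G`, encoded as a function `f` where `f u v = true`
means the edge `{u,v}` is directed from `u` to `v`. Every edge gets exactly one direction,
and non-edges carry no direction. -/
def IsOrientation {V : Type*} (G : SimpleGraph V) (f : V → V → Bool) : Prop :=
  (∀ u v, G.Adj u v → f u v = !f v u) ∧ ∀ u v, ¬ G.Adj u v → f u v = false

/-- The directed graph given by `f` contains no directed cycle. -/
def OrientAcyclic {V : Type*} (f : V → V → Bool) : Prop :=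
  ∀ v, ¬ Relation.TransGen (fun a b => f a b = true) v v

/-- The number of acyclic orientations of `G`. -/
noncomputable def numAcyclicOrientations {V : Type*} (G : SimpleGraph V) : ℕ :=
  Nat.card {f : V → V → Bool // IsOrientation G f ∧ OrientAcyclic f}

/-- The Stirling number of the second kind `S(n,k)`: the number of partitions of an
`n`-element set into `k` non-empty parts. -/
noncomputable def stirling2 (n k : ℕ) : ℕ :=
  Nat.card {P : Finpartition (Finset.univ : Finset (Fin n)) // P.parts.card = k}
/-- An orientation of the complete bipartite graph `K_{n₁,n₂}` is acyclic if and only if it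
contains no directed cycle of length 4. -/
theorem orientation_acyclic_iff_no_four_cycle (n₁ n₂ : ℕ)
    (f : (Fin n₁ ⊕ Fin n₂) → (Fin n₁ ⊕ Fin n₂) → Bool)
    (hf : IsOrientation (completeBipartiteGraph (Fin n₁) (Fin n₂)) f) :
    OrientAcyclic f ↔
      ¬ ∃ v₁ v₂ v₃ v₄ : Fin n₁ ⊕ Fin n₂, [v₁, v₂, v₃, v₄].Nodup ∧
        f v₁ v₂ = true ∧ f v₂ v₃ = true ∧ f v₃ v₄ = true ∧ f v₄ v₁ = true := by
  obtain ⟨hdir, hnon⟩ := hf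
  have hAdj : ∀ a b, f a b = true → (completeBipartiteGraph (Fin n₁) (Fin n₂)).Adj a b := by
    intro a b h
    by_contra hc
    rw [hnon a b hc] at h
    exact Bool.false_ne_true h
  have hanti : ∀ a b, f a b = true → f b a = false := by
    intro a b h
    have h2 := hdir a b (hAdj a b h)
    rw [h] at h2
    simpa using h2.symm
  have hside : ∀ a b, f a b = true → a.isLeft ≠ b.isLeft := by
    intro a b h
    have hadj := hAdj a b h
    rw [completeBipartiteGraph_adj] at hadj
    rcases a with a | a <;> rcases b with b | b <;> simp at hadj ⊢
  have hadj_of_side : ∀ a b : Fin n₁ ⊕ Fin n₂, a.isLeft ≠ b.isLeft →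
      (completeBipartiteGraph (Fin n₁) (Fin n₂)).Adj a b := by
    intro a b h
    rw [completeBipartiteGraph_adj]
    rcases a with a | a <;> rcases b with b | b <;> simp at h ⊢
  constructor
  · intro hac
    rintro ⟨v₁, v₂, v₃, v₄, -, h12, h23, h34, h41⟩
    exact hac v₁ (Relation.TransGen.head h12 (Relation.TransGen.head h23
      (Relation.TransGen.head h34 (Relation.TransGen.single h41))))
  · intro hno
    have key : ∀ n (l : List (Fin n₁ ⊕ Fin n₂)) (v w : Fin n₁ ⊕ Fin n₂),
        l.length = n → f v w = true → List.Chain (fun a b => f a b = true) w l →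
        (w :: l).getLast (by simp) = v → False := by
      intro n
      induction n using Nat.strong_induction_on with
      | _ n ih =>
      intro l v w hlen hvw hchain hlast
      rcases l with - | ⟨b, l⟩
      · simp only [List.getLast_singleton] at hlast
        exact hside v w hvw (by rw [hlast])
      rcases l with - | ⟨c, l⟩
      · rw [List.Chain, List.chain_cons] at hchain
        have hwb : f w b = true := hchain.1
        have hb : b = v := by simpa using hlast
        rw [hb, hanti v w hvw] at hwb
        exact Bool.false_ne_true hwb
      rw [List.Chain, List.chain_cons, List.chain_cons] at hchain
      obtain ⟨hwb, hbc, hchain⟩ := hchain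
      have s1 := hside v w hvw
      have s2 := hside w b hwb
      have s3 := hside b c hbc
      have svc : v.isLeft ≠ c.isLeft := by
        revert s1 s2 s3
        cases v.isLeft <;> cases w.isLeft <;> cases b.isLeft <;> cases c.isLeft <;> simp
      rcases l with - | ⟨d, l⟩
      · have hc : c = v := by simpa using hlast
        rw [hc] at svc
        exact svc rfl
      cases hcv : f c v with
      | true =>
        refine hno ⟨v, w, b, c, ?_, hvw, hwb, hbc, hcv⟩
        have hvw' : v ≠ w := fun h => s1 (by rw [h])
        have hwb' : w ≠ b := fun h => s2 (by rw [h])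
        have hbc' : b ≠ c := fun h => s3 (by rw [h])
        have hvc' : v ≠ c := fun h => svc (by rw [h])
        have hvb : v ≠ b := by
          rintro rfl
          rw [hanti v w hvw] at hwb
          exact Bool.false_ne_true hwb
        have hwc : w ≠ c := by
          rintro rfl
          rw [hanti w b hwb] at hbc
          exact Bool.false_ne_true hbc
        simp [hvw', hwb', hbc', hvc', hvb, hwc]
      | false =>
        have hvc : f v c = true := by
          have h2 := hdir v c (hadj_of_side v c svc)
          rw [hcv] at h2
          simpa using h2
        have hlast' : (c :: d :: l).getLast (by simp) = v := by
          rw [List.getLast_cons (by simp), List.getLast_cons (by simp)] at hlast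
          exact hlast
        subst hlen
        exact ih (d :: l).length (by simp) (d :: l) v c rfl hvc hchain hlast'
    intro v hcyc
    rw [Relation.TransGen.head'_iff] at hcyc
    obtain ⟨w, hvw, hwv⟩ := hcyc
    obtain ⟨l, hchain, hlast⟩ := List.exists_isChain_cons_of_relationReflTransGen hwv
    exact key l.length l v w rfl hvw hchain hlast
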